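/- In the setting of the dgl (L₁, D) built from minimal Quillen models of 2-cones, for every S ∈ 𝕃(V) the derivations [D, σ_S] and ad_S − σ_{∂_V S} agree on 𝕃(W₀): for all T ∈ 𝕃(W₀), [D, σ_S](T) = [S, T] − σ_{∂_V S}(T). Equivalently, D(σ_S(T)) = [S, T] − σ_{∂_V S}(T) for T ∈ 𝕃(W₀). -/
import Mathlib


universe u

/-- A graded Lie algebra over `ℚ`: a `ℤ`-graded vector space with a bilinear bracket
satisfying graded antisymmetry and the graded Jacobi identity on homogeneous elements. -/
structure GLA (Lc : Type u) [AddCommGroup Lc] [Module ℚ Lc] where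
  grade : ℤ → Submodule ℚ Lc
  internal : DirectSum.IsInternal grade
  br : Lc →ₗ[ℚ] Lc →ₗ[ℚ] Lc
  br_mem : ∀ {i j : ℤ} {x y : Lc}, x ∈ grade i → y ∈ grade j → br x y ∈ grade (i + j)
  antisymm : ∀ {i j : ℤ} {x y : Lc}, x ∈ grade i → y ∈ grade j →
      br x y = -((-1 : ℚ) ^ (i * j) • br y x)
  jacobi : ∀ {i j : ℤ} {x y : Lc} (z : Lc), x ∈ grade i → y ∈ grade j →
      br x (br y z) = br (br x y) z + (-1 : ℚ) ^ (i * j) • br y (br x z)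

namespace GLA

variable {Lc : Type u} [AddCommGroup Lc] [Module ℚ Lc]

/-- The Lie subalgebra (as a submodule closed under the bracket) generated by
a graded family of subspaces. -/
def lieSub (G : GLA Lc) (p : ℤ → Submodule ℚ Lc) : Submodule ℚ Lc :=
  sInf {q | (∀ i, p i ≤ q) ∧ ∀ x ∈ q, ∀ y ∈ q, G.br x y ∈ q}

/-- The submodule of decomposable elements of `L`: the span of all brackets. -/
def dec (G : GLA Lc) : Submodule ℚ Lc :=
  Submodule.span ℚ {x : Lc | ∃ a b : Lc, x = G.br a b}

/-- A graded Lie algebra is reduced if it vanishes in degrees `≤ 0`. -/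
def Reduced (G : GLA Lc) : Prop := ∀ i : ℤ, i ≤ 0 → G.grade i = ⊥

end GLA

private lemma st4_e_parity (m : ℤ) : (-1:ℚ)^m = if m % 2 = 0 then 1 else -1 := by
  rcases Int.even_or_odd m with h | h
  · rw [if_pos (Int.even_iff.mp h), h.neg_one_zpow]
  · rw [if_neg (by simp [Int.odd_iff.mp h]), h.neg_one_zpow]

namespace GLA

variable {Lc : Type u} [AddCommGroup Lc] [Module ℚ Lc]

private lemma st4_mem_lieSub (G : GLA Lc) (p : ℤ → Submodule ℚ Lc) {i : ℤ} {x : Lc}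
    (hx : x ∈ p i) : x ∈ G.lieSub p :=
  Submodule.mem_sInf.mpr fun _ hq => hq.1 i hx

private lemma st4_br_mem_lieSub (G : GLA Lc) {p : ℤ → Submodule ℚ Lc} {x y : Lc}
    (hx : x ∈ G.lieSub p) (hy : y ∈ G.lieSub p) : G.br x y ∈ G.lieSub p :=
  Submodule.mem_sInf.mpr fun q hq =>
    hq.2 x (Submodule.mem_sInf.mp hx q hq) y (Submodule.mem_sInf.mp hy q hq)

private lemma st4_lieSub_mono (G : GLA Lc) {p q : ℤ → Submodule ℚ Lc} (h : ∀ i, p i ≤ q i) :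
    G.lieSub p ≤ G.lieSub q :=
  le_sInf fun r hr => sInf_le ⟨fun i => (h i).trans (hr.1 i), hr.2⟩

private lemma st4_lieSub_le_of_graded (G : GLA Lc) (p : ℤ → Submodule ℚ Lc)
    (K : Submodule ℚ Lc)
    (hgen : ∀ i, p i ≤ Submodule.span ℚ {x | ∃ b : ℤ, x ∈ G.grade b ∧ x ∈ K})
    (hbr : ∀ (b c : ℤ) (x y : Lc), x ∈ G.grade b → x ∈ K → y ∈ G.grade c → y ∈ K →
      G.br x y ∈ K) :
    G.lieSub p ≤ K := by
  have hsub : Submodule.span ℚ {x | ∃ b : ℤ, x ∈ G.grade b ∧ x ∈ K} ≤ K :=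
    Submodule.span_le.mpr (fun x hx => by obtain ⟨b, -, h⟩ := hx; exact h)
  have inner : ∀ x ∈ {x | ∃ b : ℤ, x ∈ G.grade b ∧ x ∈ K},
      ∀ y ∈ Submodule.span ℚ {x | ∃ b : ℤ, x ∈ G.grade b ∧ x ∈ K},
      G.br x y ∈ Submodule.span ℚ {x | ∃ b : ℤ, x ∈ G.grade b ∧ x ∈ K} := by
    intro x hxs y hy
    induction hy using Submodule.span_induction with
    | mem y hys =>
      obtain ⟨b, hbg, hbK⟩ := hxs
      obtain ⟨c, hcg, hcK⟩ := hys
      exact Submodule.subset_span ⟨b + c, G.br_mem hbg hcg, hbr b c x y hbg hbK hcg hcK⟩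
    | zero => simp only [map_zero]; exact Submodule.zero_mem _
    | add y z hy hz iy iz => rw [map_add]; exact Submodule.add_mem _ iy iz
    | smul r y hy iy => rw [map_smul]; exact Submodule.smul_mem _ r iy
  have hclosed : ∀ x ∈ Submodule.span ℚ {x | ∃ b : ℤ, x ∈ G.grade b ∧ x ∈ K},
      ∀ y ∈ Submodule.span ℚ {x | ∃ b : ℤ, x ∈ G.grade b ∧ x ∈ K},
      G.br x y ∈ Submodule.span ℚ {x | ∃ b : ℤ, x ∈ G.grade b ∧ x ∈ K} := by
    intro x hx y hy
    induction hx using Submodule.span_induction with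
    | mem x hxs => exact inner x hxs y hy
    | zero => simp only [map_zero, LinearMap.zero_apply]; exact Submodule.zero_mem _
    | add x x' hx hx' ix ix' =>
      rw [map_add, LinearMap.add_apply]; exact Submodule.add_mem _ ix ix'
    | smul r x hx ix =>
      rw [map_smul, LinearMap.smul_apply]; exact Submodule.smul_mem _ r ix
  exact le_trans (sInf_le ⟨hgen, hclosed⟩) hsub

end GLA



/-- Lemma 3.4(i) and Remark 3.5(iii).  In the dgl `(L₁, D)` built from
minimal Quillen models of 2-cones, for every homogeneous `S ∈ 𝕃(V)` the derivations
`[D, σ_S]` and `ad_S - σ_{∂_V S}` agree on `𝕃(W₀)`: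
`[D, σ_S](T) = [S, T] - σ_{∂_V S}(T)`; equivalently `D(σ_S(T)) = [S, T] - σ_{∂_V S}(T)`
for all `T ∈ 𝕃(W₀)`. -/
theorem statement4
    {Lc : Type u} [AddCommGroup Lc] [Module ℚ Lc] (G : GLA Lc)
    (V0 V1 W0 W1 Sp : ℤ → Submodule ℚ Lc)
    -- the ambient free Lie algebra is reduced
    (hred : G.Reduced)
    (hV0 : ∀ i, V0 i ≤ G.grade i) (hV1 : ∀ i, V1 i ≤ G.grade i)
    (hW0 : ∀ i, W0 i ≤ G.grade i) (hW1 : ∀ i, W1 i ≤ G.grade i)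
    (hSp : ∀ i, Sp i ≤ G.grade i)
    -- the suspension `s(v ⊗ w)`, bilinear, of degree `|v|+|w|+1`; in `L₁` only
    -- `s(V₀⊗W₀) ⊕ s(V₁⊗W₀) ⊕ s(V₀⊗W₁)` is present
    (sus : Lc →ₗ[ℚ] Lc →ₗ[ℚ] Lc)
    (hsus00 : ∀ {i j : ℤ} {v w : Lc}, v ∈ V0 i → w ∈ W0 j → sus v w ∈ Sp (i + j + 1))
    (hsus10 : ∀ {i j : ℤ} {v w : Lc}, v ∈ V1 i → w ∈ W0 j → sus v w ∈ Sp (i + j + 1))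
    (hsus01 : ∀ {i j : ℤ} {v w : Lc}, v ∈ V0 i → w ∈ W1 j → sus v w ∈ Sp (i + j + 1))
    -- `L₁` is generated by `V ⊕ W ⊕ s(V₀⊗W₀) ⊕ s(V₁⊗W₀) ⊕ s(V₀⊗W₁)`
    (hgen : G.lieSub (fun i => V0 i ⊔ V1 i ⊔ W0 i ⊔ W1 i ⊔ Sp i) = ⊤)
    -- the derivations `σ_A` for homogeneous `A ∈ 𝕃(V ⊕ W)`
    (sg : ℤ → Lc → (Lc →ₗ[ℚ] Lc))
    (hsg_grade : ∀ {a : ℤ} {A : Lc}, A ∈ G.lieSub (fun i => V0 i ⊔ V1 i ⊔ W0 i ⊔ W1 i) →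
      A ∈ G.grade a → ∀ {n : ℤ} {x : Lc}, x ∈ G.grade n → sg a A x ∈ G.grade (n + a + 1))
    (hsg_der : ∀ {a : ℤ} {A : Lc}, A ∈ G.lieSub (fun i => V0 i ⊔ V1 i ⊔ W0 i ⊔ W1 i) →
      A ∈ G.grade a → ∀ {n : ℤ} (x y : Lc), x ∈ G.grade n →
      sg a A (G.br x y) = G.br (sg a A x) y + (-1 : ℚ) ^ ((a + 1) * n) • G.br x (sg a A y))
    (hsg_vw : ∀ {i j : ℤ} {v w : Lc}, v ∈ V0 i ⊔ V1 i → w ∈ W0 j → sg i v w = sus v w)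
    (hsg_vw' : ∀ {i j : ℤ} {v w : Lc}, v ∈ V0 i → w ∈ W1 j → sg i v w = sus v w)
    (hsg_wv : ∀ {i j : ℤ} {v w : Lc}, v ∈ V0 i ⊔ V1 i → w ∈ W0 j →
      sg j w v = (-1 : ℚ) ^ (i * j) • sus v w)
    (hsg_wv' : ∀ {i j : ℤ} {v w : Lc}, v ∈ V0 i → w ∈ W1 j →
      sg j w v = (-1 : ℚ) ^ (i * j) • sus v w)
    (hsg_vv : ∀ {i i' : ℤ} {v v' : Lc}, v ∈ V0 i ⊔ V1 i → v' ∈ V0 i' ⊔ V1 i' →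
      sg i v v' = 0)
    (hsg_ww : ∀ {j j' : ℤ} {w w' : Lc}, w ∈ W0 j ⊔ W1 j → w' ∈ W0 j' ⊔ W1 j' →
      sg j w w' = 0)
    (hsg_vS : ∀ {i k : ℤ} {v x : Lc}, v ∈ V0 i ⊔ V1 i → x ∈ Sp k → sg i v x = 0)
    (hsg_wS : ∀ {j k : ℤ} {w x : Lc}, w ∈ W0 j ⊔ W1 j → x ∈ Sp k → sg j w x = 0)
    (hsg_Av : ∀ {a : ℤ} {A : Lc}, A ∈ G.lieSub (fun i => V0 i ⊔ V1 i ⊔ W0 i ⊔ W1 i) →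
      A ∈ G.grade a → ∀ {i : ℤ} {v : Lc}, v ∈ V0 i ⊔ V1 i →
      sg a A v = (-1 : ℚ) ^ (i * a) • sg i v A)
    (hsg_Aw : ∀ {a : ℤ} {A : Lc}, A ∈ G.lieSub (fun i => V0 i ⊔ V1 i ⊔ W0 i ⊔ W1 i) →
      A ∈ G.grade a → ∀ {j : ℤ} {w : Lc}, w ∈ W0 j ⊔ W1 j →
      sg a A w = (-1 : ℚ) ^ (j * a) • sg j w A)
    (hsg_AS : ∀ {a : ℤ} {A : Lc}, A ∈ G.lieSub (fun i => V0 i ⊔ V1 i ⊔ W0 i ⊔ W1 i) →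
      A ∈ G.grade a → ∀ {k : ℤ} {x : Lc}, x ∈ Sp k → sg a A x = 0)
    -- the degree `-1` derivation `D` of `L₁`
    (D : Lc →ₗ[ℚ] Lc)
    (hD_grade : ∀ {i : ℤ} {x : Lc}, x ∈ G.grade i → D x ∈ G.grade (i - 1))
    (hD_der : ∀ {i : ℤ} (x y : Lc), x ∈ G.grade i →
      D (G.br x y) = G.br (D x) y + (-1 : ℚ) ^ ((-1 : ℤ) * i) • G.br x (D y))
    -- `D = ∂_V` on `V`, `D = ∂_W` on `W`, with `∂(V₀) = ∂(W₀) = 0`,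
    -- `∂(V₁) ⊆ 𝕃(V₀)` and `∂(W₁) ⊆ 𝕃(W₀)`
    (hD_V0 : ∀ {i : ℤ} {v : Lc}, v ∈ V0 i → D v = 0)
    (hD_W0 : ∀ {j : ℤ} {w : Lc}, w ∈ W0 j → D w = 0)
    (hD_V1 : ∀ {i : ℤ} {v : Lc}, v ∈ V1 i → D v ∈ G.lieSub V0)
    (hD_W1 : ∀ {j : ℤ} {w : Lc}, w ∈ W1 j → D w ∈ G.lieSub W0)
    -- minimality of the two Quillen models
    (hD_V1dec : ∀ {i : ℤ} {v : Lc}, v ∈ V1 i → D v ∈ G.dec)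
    (hD_W1dec : ∀ {j : ℤ} {w : Lc}, w ∈ W1 j → D w ∈ G.dec)
    -- the value of `D` on the suspension generators
    (hD_sus00 : ∀ {i j : ℤ} {v w : Lc}, v ∈ V0 i → w ∈ W0 j → D (sus v w) = G.br v w)
    (hD_sus10 : ∀ {i j : ℤ} {v w : Lc}, v ∈ V1 i → w ∈ W0 j →
      D (sus v w) = G.br v w - (-1 : ℚ) ^ ((i + 1) * j) • sg j w (D v))
    (hD_sus01 : ∀ {i j : ℤ} {v w : Lc}, v ∈ V0 i → w ∈ W1 j →
      D (sus v w) = G.br v w - (-1 : ℚ) ^ i • sg i v (D w))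
    -- `(L₁, D)` is a dgl
    (hDD : ∀ x : Lc, D (D x) = 0)
 :
    ∀ {a : ℤ} {S : Lc}, S ∈ G.lieSub (fun i => V0 i ⊔ V1 i) → S ∈ G.grade a →
    ∀ {T : Lc}, T ∈ G.lieSub W0 →
      (D (sg a S T) - (-1 : ℚ) ^ (a + 1) • sg a S (D T)
          = G.br S T - sg (a - 1) (D S) T) ∧
      (D (sg a S T) = G.br S T - sg (a - 1) (D S) T) := by
  
  intro a S hSV hSa T hTW
  classical
  have hVle : G.lieSub (fun i => V0 i ⊔ V1 i) ≤
      G.lieSub (fun i => V0 i ⊔ V1 i ⊔ W0 i ⊔ W1 i) :=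
    G.st4_lieSub_mono fun i => le_sup_left.trans le_sup_left
  have hV0le : G.lieSub V0 ≤ G.lieSub (fun i => V0 i ⊔ V1 i) :=
    G.st4_lieSub_mono fun i => le_sup_left
  have hwL : ∀ {j : ℤ} {w : Lc}, w ∈ W0 j →
      w ∈ G.lieSub (fun i => V0 i ⊔ V1 i ⊔ W0 i ⊔ W1 i) := by
    intro j w hw
    exact G.st4_mem_lieSub (fun i => V0 i ⊔ V1 i ⊔ W0 i ⊔ W1 i) (i := j)
      (Submodule.mem_sup_left (Submodule.mem_sup_right hw))
  -- Step A : the auxiliary submodule `Kr` and the induction over `𝕃(V)`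
  have hKrmem : ∀ x : Lc,
      (x ∈ (G.lieSub (fun i => V0 i ⊔ V1 i) ⊓
        Submodule.comap D (G.lieSub (fun i => V0 i ⊔ V1 i)) ⊓
        ⨅ (j : ℤ), ⨅ (w : Lc), ⨅ (_ : w ∈ W0 j),
          LinearMap.ker (D ∘ₗ sg j w + ((-1:ℚ)^j) • (sg j w ∘ₗ D) + G.br w))) ↔
      (x ∈ G.lieSub (fun i => V0 i ⊔ V1 i) ∧ D x ∈ G.lieSub (fun i => V0 i ⊔ V1 i) ∧
        ∀ (j : ℤ) (w : Lc), w ∈ W0 j →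
          D (sg j w x) + (-1:ℚ)^j • sg j w (D x) + G.br w x = 0) := by
    intro x
    simp only [Submodule.mem_inf, Submodule.mem_comap, Submodule.mem_iInf, LinearMap.mem_ker,
      LinearMap.add_apply, LinearMap.comp_apply, LinearMap.smul_apply]
    exact ⟨fun h => ⟨h.1.1, h.1.2, h.2⟩, fun h => ⟨⟨h.1, h.2.1⟩, h.2.2⟩⟩
  have hAle : G.lieSub (fun i => V0 i ⊔ V1 i) ≤
      (G.lieSub (fun i => V0 i ⊔ V1 i) ⊓
        Submodule.comap D (G.lieSub (fun i => V0 i ⊔ V1 i)) ⊓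
        ⨅ (j : ℤ), ⨅ (w : Lc), ⨅ (_ : w ∈ W0 j),
          LinearMap.ker (D ∘ₗ sg j w + ((-1:ℚ)^j) • (sg j w ∘ₗ D) + G.br w)) := by
    refine G.st4_lieSub_le_of_graded _ _ ?_ ?_
    · -- generators : V₀ ⊔ V₁
      intro i v hv
      obtain ⟨v0, hv0, v1, hv1, rfl⟩ := Submodule.mem_sup.mp hv
      refine Submodule.add_mem _ (Submodule.subset_span ⟨i, hV0 i hv0, ?_⟩)
        (Submodule.subset_span ⟨i, hV1 i hv1, ?_⟩)
      · refine (hKrmem v0).mpr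
          ⟨G.st4_mem_lieSub (fun i => V0 i ⊔ V1 i) (i := i) (Submodule.mem_sup_left hv0),
            ?_, ?_⟩
        · rw [hD_V0 hv0]; exact Submodule.zero_mem _
        · intro j w hw
          rw [hsg_wv (Submodule.mem_sup_left hv0) hw, hD_V0 hv0, map_zero, map_smul,
            hD_sus00 hv0 hw, G.antisymm (hW0 j hw) (hV0 i hv0)]
          match_scalars <;>
            (rcases Int.emod_two_eq i with hi | hi <;> rcases Int.emod_two_eq j with hj | hj <;>
              simp [st4_e_parity, Int.mul_emod, Int.add_emod, Int.sub_emod, hi, hj, inv_neg, inv_one])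
      · refine (hKrmem v1).mpr
          ⟨G.st4_mem_lieSub (fun i => V0 i ⊔ V1 i) (i := i) (Submodule.mem_sup_right hv1),
            hV0le (hD_V1 hv1), ?_⟩
        intro j w hw
        rw [hsg_wv (Submodule.mem_sup_right hv1) hw, map_smul, hD_sus10 hv1 hw,
          G.antisymm (hW0 j hw) (hV1 i hv1)]
        match_scalars <;>
          (rcases Int.emod_two_eq i with hi | hi <;> rcases Int.emod_two_eq j with hj | hj <;>
            simp [st4_e_parity, Int.mul_emod, Int.add_emod, Int.sub_emod, hi, hj, inv_neg, inv_one])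
    · -- closure under brackets
      intro a1 a2 S1 S2 hS1g hS1K hS2g hS2K
      obtain ⟨hS1V, hDS1V, hR1⟩ := (hKrmem S1).mp hS1K
      obtain ⟨hS2V, hDS2V, hR2⟩ := (hKrmem S2).mp hS2K
      refine (hKrmem _).mpr ⟨G.st4_br_mem_lieSub hS1V hS2V, ?_, ?_⟩
      · rw [hD_der S1 S2 hS1g]
        exact Submodule.add_mem _ (G.st4_br_mem_lieSub hDS1V hS2V)
          (Submodule.smul_mem _ _ (G.st4_br_mem_lieSub hS1V hDS2V))
      · intro j w hw
        have hwg := hW0 j hw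
        have hwLL := hwL hw
        have hZ1 : sg j w S1 ∈ G.grade (a1 + j + 1) := hsg_grade hwLL hwg hS1g
        have hR1' : D (sg j w S1) = -G.br w S1 - (-1:ℚ)^j • sg j w (D S1) := by
          linear_combination (norm := module) hR1 j w hw
        have hR2' : D (sg j w S2) = -G.br w S2 - (-1:ℚ)^j • sg j w (D S2) := by
          linear_combination (norm := module) hR2 j w hw
        rw [hsg_der hwLL hwg S1 S2 hS1g, map_add, map_smul,
          hD_der (sg j w S1) S2 hZ1, hD_der S1 (sg j w S2) hS1g, hR1', hR2',
          hD_der S1 S2 hS1g, map_add, map_smul,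
          hsg_der hwLL hwg (D S1) S2 (hD_grade hS1g),
          hsg_der hwLL hwg S1 (D S2) hS1g,
          G.jacobi S2 hwg hS1g]
        simp only [map_sub, map_neg, map_add, map_smul, LinearMap.sub_apply,
          LinearMap.neg_apply, LinearMap.add_apply, LinearMap.smul_apply,
          smul_add, smul_sub, smul_neg, smul_smul]
        match_scalars <;>
          (rcases Int.emod_two_eq j with hj | hj <;> rcases Int.emod_two_eq a1 with ha | ha <;>
            simp [st4_e_parity, Int.mul_emod, Int.add_emod, Int.sub_emod, hj, ha, inv_neg, inv_one])
  obtain ⟨-, hDSV, hRS⟩ := (hKrmem S).mp (hAle hSV)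
  have hSL := hVle hSV
  have hDSL := hVle hDSV
  have hDSg := hD_grade hSa
  -- Step B : the identity on the generators `W₀`
  have hC : ∀ (j : ℤ) (w : Lc), w ∈ W0 j →
      D (sg a S w) = G.br S w - sg (a-1) (D S) w := by
    intro j w hw
    have hwg := hW0 j hw
    have hR' : D (sg j w S) = -G.br w S - (-1:ℚ)^j • sg j w (D S) := by
      linear_combination (norm := module) hRS j w hw
    rw [hsg_Aw hSL hSa (Submodule.mem_sup_left hw), map_smul, hR',
      G.antisymm hwg hSa, hsg_Aw hDSL hDSg (Submodule.mem_sup_left hw)]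
    match_scalars <;>
      (rcases Int.emod_two_eq j with hj | hj <;> rcases Int.emod_two_eq a with ha | ha <;>
        simp [st4_e_parity, Int.mul_emod, Int.add_emod, Int.sub_emod, hj, ha, inv_neg, inv_one])
  -- Step C : the induction over `𝕃(W₀)`
  have hKtmem : ∀ x : Lc,
      (x ∈ (LinearMap.ker D ⊓
        LinearMap.ker (D ∘ₗ sg a S - G.br S + sg (a-1) (D S)))) ↔
      (D x = 0 ∧ D (sg a S x) - G.br S x + sg (a-1) (D S) x = 0) := by
    intro x
    simp only [Submodule.mem_inf, LinearMap.mem_ker, LinearMap.add_apply,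
      LinearMap.sub_apply, LinearMap.comp_apply]
  have hBle : G.lieSub W0 ≤ LinearMap.ker D ⊓
      LinearMap.ker (D ∘ₗ sg a S - G.br S + sg (a-1) (D S)) := by
    refine G.st4_lieSub_le_of_graded _ _ ?_ ?_
    · intro j w hw
      refine Submodule.subset_span ⟨j, hW0 j hw, (hKtmem w).mpr ⟨hD_W0 hw, ?_⟩⟩
      rw [hC j w hw]; abel
    · intro n1 n2 T1 T2 hT1g hT1K hT2g hT2K
      obtain ⟨hDT1, hfT1⟩ := (hKtmem T1).mp hT1K
      obtain ⟨hDT2, hfT2⟩ := (hKtmem T2).mp hT2K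
      have hP1 : D (sg a S T1) = G.br S T1 - sg (a-1) (D S) T1 := by
        linear_combination (norm := module) hfT1
      have hP2 : D (sg a S T2) = G.br S T2 - sg (a-1) (D S) T2 := by
        linear_combination (norm := module) hfT2
      refine (hKtmem _).mpr ⟨?_, ?_⟩
      · rw [hD_der T1 T2 hT1g, hDT1, hDT2]
        simp only [map_zero, LinearMap.zero_apply, smul_zero, add_zero, zero_add]
      · rw [hsg_der hSL hSa T1 T2 hT1g, map_add, map_smul,
          hD_der (sg a S T1) T2 (hsg_grade hSL hSa hT1g),
          hD_der T1 (sg a S T2) hT1g, hP1, hP2, hDT1, hDT2,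
          G.jacobi T2 hSa hT1g,
          hsg_der hDSL hDSg T1 T2 hT1g]
        simp only [map_sub, map_zero, map_add, map_smul, LinearMap.sub_apply,
          LinearMap.zero_apply, LinearMap.add_apply, LinearMap.smul_apply,
          smul_add, smul_sub, smul_zero, smul_smul, add_zero, zero_add]
        match_scalars <;>
          (rcases Int.emod_two_eq a with ha | ha <;> rcases Int.emod_two_eq n1 with hn | hn <;>
            simp [st4_e_parity, Int.mul_emod, Int.add_emod, Int.sub_emod, ha, hn, inv_neg, inv_one])
  obtain ⟨hDT0, hfT⟩ := (hKtmem T).mp (hBle hTW)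
  have hmain : D (sg a S T) = G.br S T - sg (a-1) (D S) T := by
    linear_combination (norm := module) hfT
  refine ⟨?_, hmain⟩
  rw [hDT0, map_zero, smul_zero, sub_zero]
  exact hmain
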